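/- Continuous dependence on initial data and forcing (abstract form of the paper's Theorem 3.5): Consider the abstract damped wave system with a Helmholtz projection P (with Poincaré constant C_P) and with the form r bounded by the constant ρ. Let α ∈ (0,1), M > 0, C₀ > 0, c₀ ≥ 0, and suppose the damping map G : V → V satisfies: (i) ⟨G(v) − G(w), v − w⟩ ≥ 0 for all v, w ∈ V, and (ii) for every δ > 0 and all v, w ∈ V, ‖v − w‖² + ‖G(v) − G(w)‖² ≤ (2M + (2C₀)^{1/α} δ^{−1/α}) ⟨G(v) − G(w), v − w⟩ + c₀ δ^{1/(1−α)}. Then there exist constants C > 0 and δ* > 0, depending only on c₁, c₂, C_P, ρ, M, C₀, c₀, α, β, ε, with the following property: if φ₁ and φ₂ are solutions with continuous forcings F₁ and F₂ respectively, E(t) = (1/2) a(ψ'(t), ψ'(t)) + (β/(2ε²)) ‖D ψ(t)‖² denotes the energy of the difference ψ = φ₁ − φ₂, and δ₁ ≥ 0, 0 ≤ δ₂ ≤ δ* satisfy E(0) ≤ δ₁ and ‖F₁(t) − F₂(t)‖² ≤ δ₂ for all t ≥ 0, then E(t) ≤ 3 δ₁ + C δ₂^{α/(2−α)} for all t ≥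 0. -/

import Mathlib

open scoped RealInnerProductSpace

lemma young_mul {x y c : ℝ} (hc : 0 < c) : x*y ≤ c/2*x^2 + 1/(2*c)*y^2 := by
  rw [← sub_nonneg]
  have h : c/2*x^2 + 1/(2*c)*y^2 - x*y = (c*x - y)^2/(2*c) := by field_simp; ring
  rw [h]; positivity

lemma young_sqrt {X Y c : ℝ} (hX : 0 ≤ X) (hY : 0 ≤ Y) (hc : 0 < c) :
    Real.sqrt X * Real.sqrt Y ≤ c/2*X + 1/(2*c)*Y := by
  have h1 : Real.sqrt (c*X) * Real.sqrt (Y/c) = Real.sqrt X * Real.sqrt Y := by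
    rw [← Real.sqrt_mul (by positivity), ← Real.sqrt_mul hX]
    congr 1; field_simp
  have h2 := sq_nonneg (Real.sqrt (c*X) - Real.sqrt (Y/c))
  have h3 : Real.sqrt (c*X)^2 = c*X := Real.sq_sqrt (by positivity)
  have h4 : Real.sqrt (Y/c)^2 = Y/c := Real.sq_sqrt (by positivity)
  have h6 : 2*(Real.sqrt (c*X) * Real.sqrt (Y/c)) ≤ c*X + Y/c := by nlinarith
  rw [h1] at h6
  have h7 : Y/c = 2*(1/(2*c)*Y) := by field_simp
  linarith

lemma final_combo {x y z u v : ℝ} (h1 : 2*x*1 ≤ 2*x*(v*u)) (h2 : x*u*v ≤ y*v)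
    (h3 : 2*y*v ≤ z) : 2*x ≤ z := by nlinarith only [h1, h2, h3]

/-- Gronwall-type barrier lemma. -/
lemma gronwall_aux {L L' : ℝ → ℝ} {μ A₀ : ℝ} (hμ : 0 < μ)
    (hL : ∀ t : ℝ, HasDerivAt L (L' t) t)
    (hineq : ∀ t : ℝ, 0 < t → L' t ≤ -μ * L t + A₀) :
    ∀ t : ℝ, 0 ≤ t → L t ≤ max (L 0) (A₀ / μ) := by
  intro t ht
  set c := A₀ / μ with hc
  set g : ℝ → ℝ := fun s => (L s - c) * Real.exp (μ * s) with hg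
  have hgd : ∀ s : ℝ, HasDerivAt g ((L' s) * Real.exp (μ * s) + (L s - c) * (Real.exp (μ * s) * μ)) s := by
    intro s
    have he : HasDerivAt (fun x : ℝ => Real.exp (μ * x)) (Real.exp (μ * s) * μ) s := by
      simpa using ((hasDerivAt_id s).const_mul μ).exp
    exact ((hL s).sub_const c).mul he
  have hanti : AntitoneOn g (Set.Ici (0:ℝ)) := by
    apply antitoneOn_of_deriv_nonpos (convex_Ici 0)
    · exact fun s _ => ((hgd s).continuousAt).continuousWithinAt
    · intro s _
      exact ((hgd s).differentiableAt).differentiableWithinAt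
    · intro s hs
      rw [interior_Ici] at hs
      rw [(hgd s).deriv]
      have h1 := hineq s hs
      have h2 : (0:ℝ) < Real.exp (μ * s) := Real.exp_pos _
      have hce : μ * c = A₀ := by rw [hc]; field_simp
      nlinarith [mul_le_mul_of_nonneg_right (show L' s ≤ -μ * L s + A₀ from h1) h2.le]
  have hg0 : g t ≤ g 0 := hanti Set.self_mem_Ici ht ht
  have hexp1 : (1:ℝ) ≤ Real.exp (μ * t) := by
    rw [Real.one_le_exp_iff]; positivity
  have hexp0 : (0:ℝ) < Real.exp (μ * t) := Real.exp_pos _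
  simp only [hg, mul_zero, Real.exp_zero, mul_one] at hg0
  rcases le_or_gt (L 0 - c) 0 with h | h
  · have h3 : (L t - c) * Real.exp (μ * t) ≤ 0 := le_trans hg0 h
    have : L t ≤ c := by nlinarith
    exact le_max_of_le_right this
  · have : L t - c ≤ L 0 - c := by nlinarith
    exact le_max_of_le_left (by linarith)

set_option maxHeartbeats 2000000 in
/-- Continuous dependence on initial data and forcing (paper's Theorem 3.5, abstract form). -/
theorem continuous_dependence
    {V W : Type*} [NormedAddCommGroup V] [InnerProductSpace ℝ V]
    [NormedAddCommGroup W] [InnerProductSpace ℝ W]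
    (a : V → V → ℝ) (c₁ c₂ : ℝ) (hc₁ : 0 < c₁) (hc₁₂ : c₁ ≤ c₂)
    (ha_bilin : ∀ (s : ℝ) (u v w : V), a (u + s • v) w = a u w + s * a v w)
    (ha_symm : ∀ u v : V, a u v = a v u)
    (ha_lower : ∀ v : V, c₁ * ‖v‖ ^ 2 ≤ a v v)
    (ha_upper : ∀ v : V, a v v ≤ c₂ * ‖v‖ ^ 2)
    (D : V →L[ℝ] W)
    (r : V → V → ℝ)
    (hr_bilin : ∀ (s : ℝ) (u v w : V), r (u + s • v) w = r u w + s * r v w)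
    (hr_bilin' : ∀ (s : ℝ) (u v w : V), r u (v + s • w) = r u v + s * r u w)
    (hr_zero : ∀ v : V, r v v = 0)
    (ρ : ℝ) (hρ : 0 ≤ ρ)
    (hr_bound : ∀ u v : V, |r u v| ≤ ρ * Real.sqrt (a u u) * Real.sqrt (a v v))
    (P : V →L[ℝ] V) (C_P : ℝ) (hC_P : 0 < C_P)
    (hP_div : ∀ v : V, D (P v) = D v)
    (hP_orth : ∀ v : V, a (P v) (v - P v) = 0)
    (hP_poincare : ∀ v : V, a (P v) (P v) ≤ C_P ^ 2 * ‖D v‖ ^ 2)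
    (α M C₀ c₀ : ℝ) (hα : α ∈ Set.Ioo (0 : ℝ) 1) (hM : 0 < M) (hC₀ : 0 < C₀)
    (hc₀ : 0 ≤ c₀)
    (G : V → V)
    (hG_monot : ∀ v w : V, 0 ≤ ⟪G v - G w, v - w⟫)
    (hG_diff : ∀ δ : ℝ, 0 < δ → ∀ v w : V,
      ‖v - w‖ ^ 2 + ‖G v - G w‖ ^ 2
        ≤ (2 * M + (2 * C₀) ^ (1 / α) * δ ^ (-(1 / α))) * ⟪G v - G w, v - w⟫
          + c₀ * δ ^ (1 / (1 - α)))
    (β ε : ℝ) (hβ : 0 < β) (hε : 0 < ε) :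
    ∃ C δstar : ℝ, 0 < C ∧ 0 < δstar ∧
      ∀ (φ₁ φ₂ : ℝ → V) (F₁ F₂ : ℝ → V),
        ContDiff ℝ 2 φ₁ → ContDiff ℝ 2 φ₂ → Continuous F₁ → Continuous F₂ →
        (∀ t : ℝ, 0 ≤ t → ∀ v : V,
          a (deriv (deriv φ₁) t) v + r (deriv φ₁ t) v
            + (β / ε ^ 2) * ⟪D (φ₁ t), D v⟫ + ⟪G (deriv φ₁ t), v⟫ = ⟪F₁ t, v⟫) →
        (∀ t : ℝ, 0 ≤ t → ∀ v : V,
          a (deriv (deriv φ₂) t) v + r (deriv φ₂ t) v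
            + (β / ε ^ 2) * ⟪D (φ₂ t), D v⟫ + ⟪G (deriv φ₂ t), v⟫ = ⟪F₂ t, v⟫) →
        ∀ E : ℝ → ℝ,
        (∀ t : ℝ, E t = (1 / 2) * a (deriv (fun s => φ₁ s - φ₂ s) t)
                                    (deriv (fun s => φ₁ s - φ₂ s) t)
              + (β / (2 * ε ^ 2)) * ‖D (φ₁ t - φ₂ t)‖ ^ 2) →
        ∀ δ₁ δ₂ : ℝ, 0 ≤ δ₁ → 0 ≤ δ₂ → δ₂ ≤ δstar →
          E 0 ≤ δ₁ → (∀ t : ℝ, 0 ≤ t → ‖F₁ t - F₂ t‖ ^ 2 ≤ δ₂) →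
          ∀ t : ℝ, 0 ≤ t → E t ≤ 3 * δ₁ + C * δ₂ ^ (α / (2 - α)) := by
  obtain ⟨hα0, hα1⟩ := hα
  have h1α : 0 < 1 - α := by linarith
  have h2α : 0 < 2 - α := by linarith
  have hc₂ : 0 < c₂ := lt_of_lt_of_le hc₁ hc₁₂
  have hεne : ε ≠ 0 := ne_of_gt hε
  -- bilinear form algebra
  have ha_zero : ∀ w : V, a 0 w = 0 := by
    intro w
    have h := ha_bilin 1 0 0 w
    simp at h
    linarith
  have ha_add : ∀ u v w : V, a (u + v) w = a u w + a v w := by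
    intro u v w; have h := ha_bilin 1 u v w; simpa using h
  have ha_smul : ∀ (s : ℝ) (v w : V), a (s • v) w = s * a v w := by
    intro s v w
    have h := ha_bilin s 0 v w
    simp at h
    rw [h, ha_zero]; ring
  have ha_sub : ∀ u v w : V, a (u - v) w = a u w - a v w := by
    intro u v w
    have h := ha_bilin (-1) u v w
    rw [sub_eq_add_neg, ← neg_one_smul ℝ v, h]; ring
  have ha_add' : ∀ u v w : V, a u (v + w) = a u v + a u w := by
    intro u v w; rw [ha_symm, ha_add, ha_symm v u, ha_symm w u]
  have ha_sub' : ∀ u v w : V, a u (v - w) = a u v - a u w := by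
    intro u v w; rw [ha_symm, ha_sub, ha_symm v u, ha_symm w u]
  have ha_nonneg : ∀ v : V, 0 ≤ a v v := fun v =>
    le_trans (by positivity) (ha_lower v)
  have haCS : ∀ u v : V, |a u v| ≤ c₂ * ‖u‖ * ‖v‖ := by
    have hCSsq : ∀ u v : V, (a u v)^2 ≤ a u u * a v v := by
      intro u v
      have hquad : ∀ s : ℝ, 0 ≤ (a v v) * (s*s) + (2 * a u v) * s + a u u := by
        intro s
        have hexp : a (u + s • v) (u + s • v) = a u u + 2*s*(a u v) + s^2 * a v v := by
          rw [ha_bilin s u v (u + s • v), ha_symm u (u + s•v), ha_symm v (u + s•v),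
            ha_bilin s u v u, ha_bilin s u v v, ha_symm u u, ha_symm v u, ha_symm v v,
            ha_symm u v]
          ring
        have h0 := ha_nonneg (u + s • v)
        rw [hexp] at h0
        nlinarith
      have hd := discrim_le_zero hquad
      simp only [discrim] at hd
      nlinarith
    intro u v
    have h1 := hCSsq u v
    have h2 : a u u * a v v ≤ (c₂*‖u‖*‖v‖)^2 := by
      calc a u u * a v v ≤ (c₂*‖u‖^2) * (c₂*‖v‖^2) := by
            apply mul_le_mul (ha_upper u) (ha_upper v) (ha_nonneg v) (by positivity)
        _ = (c₂*‖u‖*‖v‖)^2 := by ring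
    have h3 : (0:ℝ) ≤ c₂*‖u‖*‖v‖ := by positivity
    rw [abs_le]
    constructor <;> nlinarith
  have hr_sub : ∀ u v w : V, r (u - v) w = r u w - r v w := by
    intro u v w
    have h := hr_bilin (-1) u v w
    rw [sub_eq_add_neg, ← neg_one_smul ℝ v, h]; ring
  -- the bilinear form as a continuous bilinear map
  obtain ⟨A, hA⟩ : ∃ A : V →L[ℝ] V →L[ℝ] ℝ, ∀ u v, A u v = a u v := by
    refine ⟨LinearMap.mkContinuous₂
      (LinearMap.mk₂ ℝ a ha_add (by intro c m n; rw [ha_smul]; rfl) ha_add'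
        (by intro c m n; rw [ha_symm, ha_smul, ha_symm n m]; rfl)) c₂ ?_, fun u v => rfl⟩
    intro x y
    simpa using haCS x y
  -- projection facts
  have haP : ∀ v : V, a v (P v) = a (P v) (P v) := by
    intro v
    have h : a (P v) v = a (P v) (P v) + a (P v) (v - P v) := by
      rw [← ha_add']; congr 1; abel
    rw [ha_symm, h, hP_orth, add_zero]
  have haPle : ∀ v : V, a (P v) (P v) ≤ a v v := by
    intro v
    have hdec : a v v = a (P v) (P v) + 2 * a (P v) (v - P v) + a (v - P v) (v - P v) := by
      have h : v = P v + (v - P v) := by abel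
      calc a v v = a (P v + (v - P v)) (P v + (v - P v)) := by rw [← h]
        _ = _ := by
            rw [ha_add, ha_add', ha_add', ha_symm (v - P v) (P v)]
            ring
    have h2 := ha_nonneg (v - P v)
    rw [hP_orth] at hdec
    linarith
  -- constants
  set bb := β/(2*ε^2) with hbbdef
  have hbb : 0 < bb := by positivity
  set Q₁ := C_P^2/(c₁*bb) with hQ₁def
  have hQ₁pos : 0 < Q₁ := by positivity
  set s₀ := (2*ρ*C_P^2+1)/bb with hs₀def
  have hs₀pos : 0 < s₀ := by positivity
  have hρs₀ : 0 < ρ*s₀+1 := by positivity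
  set B := (2 * C₀) ^ (1 / α) with hBdef
  have hBpos : 0 < B := Real.rpow_pos_of_pos (by linarith) _
  set ee := α/(2-α) with heedef
  have heepos : 0 < ee := by positivity
  have hee1 : ee ≤ 1 := by rw [heedef, div_le_one h2α]; linarith
  set γ := α*(1-α)/(2-α) with hγdef
  have hγpos : 0 < γ := by positivity
  set c₃ := min (1/2) (min (bb/C_P^2) (min (1/(16*c₂)) (min (1/(8*(ρ*s₀+1)*c₂))
    (min (c₁*bb/(2*C_P^2)) (1/(2*c₂)))))) with hc₃def
  have hc₃pos : 0 < c₃ := by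
    refine lt_min one_half_pos (lt_min (by positivity) (lt_min (by positivity)
      (lt_min (by positivity) (lt_min (by positivity) (by positivity)))))
  set C₅ := 16*M^2+4*B^2+2*(2*M+B)+Q₁*(2*M+B)+Q₁+(1+1/(2*M))*c₀ with hC₅def
  have hC₅pos : 0 < C₅ := by positivity
  refine ⟨3*C₅/c₃, 1, by positivity, one_pos, ?_⟩
  intro φ₁ φ₂ F₁ F₂ hφ₁ hφ₂ hF₁ hF₂ heq₁ heq₂ E hE δ₁ δ₂ hδ₁ hδ₂0 hδ₂1 hE0 hF t ht
  -- differentiability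
  have hdd : ∀ φ : ℝ → V, ContDiff ℝ 2 φ → Differentiable ℝ φ ∧ Differentiable ℝ (deriv φ) := by
    intro φ h
    have h2 : ContDiff ℝ ((1:WithTop ℕ∞)+1) φ := by
      have e : ((1:WithTop ℕ∞)+1) = 2 := by norm_num
      rw [e]; exact h
    rw [contDiff_succ_iff_deriv] at h2
    exact ⟨h2.1, h2.2.2.differentiable one_ne_zero⟩
  obtain ⟨hφ₁d, hφ₁d2⟩ := hdd φ₁ hφ₁
  obtain ⟨hφ₂d, hφ₂d2⟩ := hdd φ₂ hφ₂
  obtain ⟨ψ, hψdef⟩ : ∃ f : ℝ → V, f = fun s => φ₁ s - φ₂ s := ⟨_, rfl⟩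
  obtain ⟨w, hwdef⟩ : ∃ f : ℝ → V, f = fun τ => deriv φ₁ τ - deriv φ₂ τ := ⟨_, rfl⟩
  obtain ⟨w', hw'def⟩ : ∃ f : ℝ → V, f = fun τ => deriv (deriv φ₁) τ - deriv (deriv φ₂) τ := ⟨_, rfl⟩
  have hwD : ∀ τ, HasDerivAt ψ (w τ) τ := by
    intro τ
    rw [hψdef, hwdef]
    exact ((hφ₁d τ).hasDerivAt).sub ((hφ₂d τ).hasDerivAt)
  have hw'D : ∀ τ, HasDerivAt w (w' τ) τ := by
    intro τ
    rw [hwdef, hw'def]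
    exact ((hφ₁d2 τ).hasDerivAt).sub ((hφ₂d2 τ).hasDerivAt)
  have hderivψ : ∀ τ, deriv (fun s => φ₁ s - φ₂ s) τ = w τ := by
    intro τ
    rw [← hψdef]
    exact (hwD τ).deriv
  have hψap : ∀ τ, φ₁ τ - φ₂ τ = ψ τ := by intro τ; rw [hψdef]
  have hEE : ∀ τ, E τ = 1/2 * a (w τ) (w τ) + bb * ‖D (ψ τ)‖^2 := by
    intro τ
    rw [hE τ, hderivψ, hψap, hbbdef]
  have hEnonneg : ∀ τ, 0 ≤ E τ := by
    intro τ
    rw [hEE τ]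
    have h1 := ha_nonneg (w τ)
    have h2 : (0:ℝ) ≤ bb * ‖D (ψ τ)‖^2 := by positivity
    linarith
  have hEd : ∀ τ, HasDerivAt E (a (w' τ) (w τ) + (β/ε^2) * ⟪D (ψ τ), D (w τ)⟫) τ := by
    have hfun : E = fun τ => 1/2 * (A (w τ) (w τ)) + bb * ⟪D (ψ τ), D (ψ τ)⟫ := by
      funext τ; rw [hEE τ, hA, real_inner_self_eq_norm_sq]
    intro τ
    rw [hfun]
    have hDψ : HasDerivAt (fun τ' => D (ψ τ')) (D (w τ)) τ :=
      D.hasFDerivAt.comp_hasDerivAt τ (hwD τ)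
    have h1 : HasDerivAt (fun τ' => A (w τ') (w τ')) (A (w' τ) (w τ) + A (w τ) (w' τ)) τ :=
      (A.hasFDerivAt.comp_hasDerivAt τ (hw'D τ)).clm_apply (hw'D τ)
    have h2 : HasDerivAt (fun τ' => ⟪D (ψ τ'), D (ψ τ')⟫)
        (⟪D (ψ τ), D (w τ)⟫ + ⟪D (w τ), D (ψ τ)⟫) τ := hDψ.inner ℝ hDψ
    have h3 := (h1.const_mul (1/2:ℝ)).add (h2.const_mul bb)
    refine h3.congr_deriv ?_
    rw [hA, hA, ha_symm (w τ) (w' τ), real_inner_comm (D (w τ)) (D (ψ τ)), hbbdef]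
    field_simp
    ring
  -- the subtracted equation
  have heqd : ∀ τ, 0 ≤ τ → ∀ v : V,
      a (w' τ) v + r (w τ) v + (β/ε^2) * ⟪D (ψ τ), D v⟫
        + ⟪G (deriv φ₁ τ) - G (deriv φ₂ τ), v⟫ = ⟪F₁ τ - F₂ τ, v⟫ := by
    intro τ hτ v
    have h1 := heq₁ τ hτ v
    have h2 := heq₂ τ hτ v
    have e1 : a (w' τ) v = a (deriv (deriv φ₁) τ) v - a (deriv (deriv φ₂) τ) v := by
      simp only [hw'def]; exact ha_sub _ _ _
    have e2 : r (w τ) v = r (deriv φ₁ τ) v - r (deriv φ₂ τ) v := by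
      simp only [hwdef]; exact hr_sub _ _ _
    have e3 : D (ψ τ) = D (φ₁ τ) - D (φ₂ τ) := by simp only [hψdef]; exact map_sub D _ _
    rw [e1, e2, e3, inner_sub_left, inner_sub_left, inner_sub_left]
    linarith
  rcases eq_or_lt_of_le hδ₂0 with h0 | hδ₂pos
  · -- δ₂ = 0 : the forcings agree, so the energy is non-increasing
    have hf0 : ∀ τ, 0 ≤ τ → F₁ τ - F₂ τ = 0 := by
      intro τ hτ
      have h := hF τ hτ
      rw [← h0] at h
      have h4 : ‖F₁ τ - F₂ τ‖^2 = 0 := le_antisymm h (by positivity)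
      exact norm_eq_zero.mp ((pow_eq_zero_iff two_ne_zero).mp h4)
    have hanti : AntitoneOn E (Set.Ici (0:ℝ)) := by
      apply antitoneOn_of_deriv_nonpos (convex_Ici 0)
      · exact fun τ _ => (hEd τ).continuousAt.continuousWithinAt
      · intro τ _; exact (hEd τ).differentiableAt.differentiableWithinAt
      · intro τ hτ
        rw [interior_Ici] at hτ
        rw [(hEd τ).deriv]
        have h1 := heqd τ hτ.le (w τ)
        rw [hr_zero, hf0 τ hτ.le, inner_zero_left] at h1
        have h2 := hG_monot (deriv φ₁ τ) (deriv φ₂ τ)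
        have h3 : (deriv φ₁ τ : V) - deriv φ₂ τ = w τ := by rw [hwdef]
        rw [h3] at h2
        linarith
    have hEt0 : E t ≤ E 0 := hanti Set.self_mem_Ici ht ht
    have h0e : δ₂ ^ ee = 0 := by rw [← h0]; exact Real.zero_rpow (ne_of_gt heepos)
    rw [h0e]
    linarith
  · -- δ₂ > 0 : the main energy argument
    obtain ⟨δ, hδdef⟩ : ∃ x : ℝ, x = δ₂ ^ γ := ⟨_, rfl⟩
    have hδpos : 0 < δ := by rw [hδdef]; exact Real.rpow_pos_of_pos hδ₂pos γ
    obtain ⟨K, hKdef⟩ : ∃ x : ℝ, x = 2*M + B * δ ^ (-(1/α)) := ⟨_, rfl⟩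
    have hδα : 0 < δ ^ (-(1/α)) := Real.rpow_pos_of_pos hδpos _
    have hBδ : 0 < B * δ ^ (-(1/α)) := mul_pos hBpos hδα
    have hKpos : 0 < K := by rw [hKdef]; linarith
    have hK2M : 2*M ≤ K := by rw [hKdef]; linarith
    obtain ⟨k, hkdef⟩ : ∃ x : ℝ, x = 1/K := ⟨_, rfl⟩
    have hkpos : 0 < k := by rw [hkdef]; positivity
    have hkK : k * K = 1 := by rw [hkdef]; field_simp
    have hk2M : k ≤ 1/(2*M) := by
      rw [hkdef]
      apply one_div_le_one_div_of_le (by positivity) hK2M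
    obtain ⟨R, hRdef⟩ : ∃ x : ℝ, x = c₀ * δ ^ (1/(1-α)) := ⟨_, rfl⟩
    have hR0 : 0 ≤ R := by
      rw [hRdef]
      exact mul_nonneg hc₀ (Real.rpow_pos_of_pos hδpos _).le
    obtain ⟨η, hηdef⟩ : ∃ x : ℝ, x = min (min (1/2) (bb/C_P^2)) (min (1/(16*K*c₂))
      (min (1/(8*K*(ρ*s₀+1)*c₂)) (c₁*bb/(2*C_P^2*K)))) := ⟨_, rfl⟩
    have hηpos : 0 < η := by
      rw [hηdef]
      refine lt_min (lt_min one_half_pos (by positivity))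
        (lt_min (by positivity) (lt_min (by positivity) (by positivity)))
    have hη1 : η ≤ 1/2 := by
      rw [hηdef]; exact le_trans (min_le_left _ _) (min_le_left _ _)
    have hη2 : η * C_P^2 ≤ bb := by
      have h : η ≤ bb/C_P^2 := by
        rw [hηdef]; exact le_trans (min_le_left _ _) (min_le_right _ _)
      rw [← le_div_iff₀ (by positivity : (0:ℝ) < C_P^2)]
      exact h
    have hη3 : η * c₂ ≤ k/16 := by
      have h : η ≤ 1/(16*K*c₂) := by
        rw [hηdef]; exact le_trans (min_le_right _ _) (min_le_left _ _)
      have he : (1/(16*K*c₂)) * c₂ = k/16 := by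
        rw [hkdef]; field_simp
      calc η * c₂ ≤ (1/(16*K*c₂)) * c₂ := mul_le_mul_of_nonneg_right h hc₂.le
        _ = k/16 := he
    have hη4 : η * ((ρ*s₀+1) * c₂) ≤ k/8 := by
      have h : η ≤ 1/(8*K*(ρ*s₀+1)*c₂) := by
        rw [hηdef]
        exact le_trans (min_le_right _ _) (le_trans (min_le_right _ _) (min_le_left _ _))
      have he : (1/(8*K*(ρ*s₀+1)*c₂)) * ((ρ*s₀+1) * c₂) = k/8 := by
        rw [hkdef]; field_simp
      calc η * ((ρ*s₀+1) * c₂) ≤ (1/(8*K*(ρ*s₀+1)*c₂)) * ((ρ*s₀+1) * c₂) :=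
            mul_le_mul_of_nonneg_right h (by positivity)
        _ = k/8 := he
    have hη5 : η * Q₁ ≤ k/2 := by
      have h : η ≤ c₁*bb/(2*C_P^2*K) := by
        rw [hηdef]
        exact le_trans (min_le_right _ _) (le_trans (min_le_right _ _) (min_le_right _ _))
      have he : (c₁*bb/(2*C_P^2*K)) * Q₁ = k/2 := by
        rw [hQ₁def, hkdef]; field_simp
      calc η * Q₁ ≤ (c₁*bb/(2*C_P^2*K)) * Q₁ := mul_le_mul_of_nonneg_right h hQ₁pos.le
        _ = k/2 := he
    obtain ⟨lam, hlamdef⟩ : ∃ x : ℝ, x = min (k/(2*c₂)) η := ⟨_, rfl⟩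
    have hlampos : 0 < lam := by
      rw [hlamdef]
      exact lt_min (by positivity) hηpos
    have hlam1 : lam ≤ k/(2*c₂) := by rw [hlamdef]; exact min_le_left _ _
    have hlam2 : lam ≤ η := by rw [hlamdef]; exact min_le_right _ _
    obtain ⟨μ, hμdef⟩ : ∃ x : ℝ, x = (2/3)*lam := ⟨_, rfl⟩
    have hμpos : 0 < μ := by rw [hμdef]; positivity
    obtain ⟨A₀, hA₀def⟩ : ∃ x : ℝ, x = (2*K+Q₁)*δ₂ + k*R := ⟨_, rfl⟩
    have hA₀0 : 0 ≤ A₀ := by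
      rw [hA₀def]
      have h1 : (0:ℝ) ≤ (2*K+Q₁)*δ₂ := mul_nonneg (by positivity) hδ₂pos.le
      have h2 : (0:ℝ) ≤ k*R := mul_nonneg hkpos.le hR0
      linarith
    -- Lyapunov function
    obtain ⟨Qf, hQfdef⟩ : ∃ f : ℝ → ℝ, f = fun τ => a (w τ) (P (ψ τ)) := ⟨_, rfl⟩
    obtain ⟨Lf, hLfdef⟩ : ∃ f : ℝ → ℝ, f = fun τ => E τ + η * Qf τ := ⟨_, rfl⟩
    obtain ⟨Ld, hLddef⟩ : ∃ f : ℝ → ℝ, f = fun τ => (a (w' τ) (w τ)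
      + (β/ε^2) * ⟪D (ψ τ), D (w τ)⟫)
      + η * (a (w' τ) (P (ψ τ)) + a (w τ) (P (w τ))) := ⟨_, rfl⟩
    have hQd : ∀ τ, HasDerivAt Qf (a (w' τ) (P (ψ τ)) + a (w τ) (P (w τ))) τ := by
      intro τ
      have hPψ : HasDerivAt (fun τ' => P (ψ τ')) (P (w τ)) τ :=
        P.hasFDerivAt.comp_hasDerivAt τ (hwD τ)
      have h1 : HasDerivAt (fun τ' => A (w τ') (P (ψ τ')))
          (A (w' τ) (P (ψ τ)) + A (w τ) (P (w τ))) τ :=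
        (A.hasFDerivAt.comp_hasDerivAt τ (hw'D τ)).clm_apply hPψ
      have hfun : Qf = fun τ' => A (w τ') (P (ψ τ')) := by
        funext τ'
        simp only [hQfdef]
        exact (hA _ _).symm
      rw [hfun, ← hA (w' τ) (P (ψ τ)), ← hA (w τ) (P (w τ))]
      exact h1
    have hLD : ∀ τ, HasDerivAt Lf (Ld τ) τ := by
      intro τ
      have h := (hEd τ).add ((hQd τ).const_mul η)
      simp only [hLfdef, hLddef]
      exact h
    -- comparability of the Lyapunov function with the energy
    have hcomp : ∀ τ, |η * Qf τ| ≤ 1/2 * E τ := by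
      intro τ
      have hQval : Qf τ = a (w τ) (P (ψ τ)) := by simp only [hQfdef]
      have exp1 : a (w τ - P (ψ τ)) (w τ - P (ψ τ))
          = a (w τ) (w τ) - 2*(a (w τ) (P (ψ τ))) + a (P (ψ τ)) (P (ψ τ)) := by
        rw [ha_sub (w τ) (P (ψ τ)) (w τ - P (ψ τ)),
          ha_sub' (w τ) (w τ) (P (ψ τ)), ha_sub' (P (ψ τ)) (w τ) (P (ψ τ)),
          ha_symm (P (ψ τ)) (w τ)]
        ring
      have exp2 : a (w τ + P (ψ τ)) (w τ + P (ψ τ))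
          = a (w τ) (w τ) + 2*(a (w τ) (P (ψ τ))) + a (P (ψ τ)) (P (ψ τ)) := by
        rw [ha_add (w τ) (P (ψ τ)) (w τ + P (ψ τ)),
          ha_add' (w τ) (w τ) (P (ψ τ)), ha_add' (P (ψ τ)) (w τ) (P (ψ τ)),
          ha_symm (P (ψ τ)) (w τ)]
        ring
      have h1 := ha_nonneg (w τ - P (ψ τ))
      have h2 := ha_nonneg (w τ + P (ψ τ))
      rw [exp1] at h1
      rw [exp2] at h2
      have habs : |a (w τ) (P (ψ τ))| ≤ 1/2*(a (w τ) (w τ) + a (P (ψ τ)) (P (ψ τ))) :=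
        abs_le.mpr ⟨by linarith, by linarith⟩
      have happ : a (P (ψ τ)) (P (ψ τ)) ≤ C_P^2 * ‖D (ψ τ)‖^2 := hP_poincare (ψ τ)
      have hd2 : (0:ℝ) ≤ ‖D (ψ τ)‖^2 := by positivity
      have hauu := ha_nonneg (w τ)
      rw [hQval, abs_mul, abs_of_nonneg hηpos.le, hEE τ]
      have hQb := mul_le_mul_of_nonneg_left habs hηpos.le
      have h3 : η * (a (P (ψ τ)) (P (ψ τ))) ≤ η * (C_P^2 * ‖D (ψ τ)‖^2) :=
        mul_le_mul_of_nonneg_left happ hηpos.le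
      have h4 : (η * C_P^2) * ‖D (ψ τ)‖^2 ≤ bb * ‖D (ψ τ)‖^2 :=
        mul_le_mul_of_nonneg_right hη2 hd2
      have h5 : η * (a (w τ) (w τ)) ≤ 1/2 * (a (w τ) (w τ)) :=
        mul_le_mul_of_nonneg_right hη1 hauu
      linarith only [hQb, h3, h4, h5]
    -- key differential inequality
    have hkey : ∀ τ, 0 < τ → Ld τ ≤ -μ * Lf τ + A₀ := by
      intro τ hτ
      have hffδ : ‖F₁ τ - F₂ τ‖^2 ≤ δ₂ := hF τ hτ.le
      have hUnn : (0:ℝ) ≤ ‖w τ‖^2 := by positivity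
      have hGnn : (0:ℝ) ≤ ‖G (deriv φ₁ τ) - G (deriv φ₂ τ)‖^2 := by positivity
      have hd2nn : (0:ℝ) ≤ ‖D (ψ τ)‖^2 := by positivity
      have hauu := ha_nonneg (w τ)
      have happ := ha_nonneg (P (ψ τ))
      have hEdval : a (w' τ) (w τ) + (β/ε^2) * ⟪D (ψ τ), D (w τ)⟫
          = ⟪F₁ τ - F₂ τ, w τ⟫ - ⟪G (deriv φ₁ τ) - G (deriv φ₂ τ), w τ⟫ := by
        have h := heqd τ hτ.le (w τ)
        rw [hr_zero] at h
        linarith only [h]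
      have hQdval : a (w' τ) (P (ψ τ)) = ⟪F₁ τ - F₂ τ, P (ψ τ)⟫ - r (w τ) (P (ψ τ))
          - (β/ε^2) * ‖D (ψ τ)‖^2 - ⟪G (deriv φ₁ τ) - G (deriv φ₂ τ), P (ψ τ)⟫ := by
        have h := heqd τ hτ.le (P (ψ τ))
        rw [hP_div, real_inner_self_eq_norm_sq] at h
        linarith only [h]
      have hQdval2 : η * a (w' τ) (P (ψ τ)) = η * ⟪F₁ τ - F₂ τ, P (ψ τ)⟫
          - η * r (w τ) (P (ψ τ)) - η * ((β/ε^2) * ‖D (ψ τ)‖^2)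
          - η * ⟪G (deriv φ₁ τ) - G (deriv φ₂ τ), P (ψ τ)⟫ := by
        rw [hQdval]; ring
      have hwfold : deriv φ₁ τ - deriv φ₂ τ = w τ := by rw [hwdef]
      have hX0 : (0:ℝ) ≤ ⟪G (deriv φ₁ τ) - G (deriv φ₂ τ), w τ⟫ := by
        have h := hG_monot (deriv φ₁ τ) (deriv φ₂ τ)
        rwa [hwfold] at h
      have hH : ‖w τ‖^2 + ‖G (deriv φ₁ τ) - G (deriv φ₂ τ)‖^2
          ≤ K * ⟪G (deriv φ₁ τ) - G (deriv φ₂ τ), w τ⟫ + R := by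
        have h := hG_diff δ hδpos (deriv φ₁ τ) (deriv φ₂ τ)
        rw [hwfold, ← hKdef, ← hRdef] at h
        exact h
      have hconv : k*‖w τ‖^2 + k*‖G (deriv φ₁ τ) - G (deriv φ₂ τ)‖^2
          ≤ ⟪G (deriv φ₁ τ) - G (deriv φ₂ τ), w τ⟫ + k*R := by
        have h1 := mul_le_mul_of_nonneg_left hH hkpos.le
        have h2 : k*(K*⟪G (deriv φ₁ τ) - G (deriv φ₂ τ), w τ⟫)
            = ⟪G (deriv φ₁ τ) - G (deriv φ₂ τ), w τ⟫ := by
          rw [← mul_assoc, hkK, one_mul]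
        linarith only [h1, h2]
      have ht1 : ⟪F₁ τ - F₂ τ, w τ⟫ ≤ 2*K*‖F₁ τ - F₂ τ‖^2 + k/8*‖w τ‖^2 := by
        have hcs := real_inner_le_norm (F₁ τ - F₂ τ) (w τ)
        have hy := young_mul (x := ‖w τ‖) (y := ‖F₁ τ - F₂ τ‖)
          (c := k/4) (by positivity)
        have he : 1/(2*(k/4)) = 2*K := by rw [hkdef]; field_simp; try ring
        rw [he] at hy
        linarith only [hy, hcs]
      have haup : η * a (w τ) (P (w τ)) ≤ k/16*‖w τ‖^2 := by
        have h1 : a (w τ) (P (w τ)) = a (P (w τ)) (P (w τ)) := haP (w τ)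
        have h2 : a (P (w τ)) (P (w τ)) ≤ a (w τ) (w τ) := haPle (w τ)
        have h3 : a (w τ) (w τ) ≤ c₂*‖w τ‖^2 := ha_upper (w τ)
        have h4 : η * a (w τ) (P (w τ)) ≤ η * (c₂*‖w τ‖^2) := by
          apply mul_le_mul_of_nonneg_left _ hηpos.le
          rw [h1]; linarith
        have h5 : (η*c₂)*‖w τ‖^2 ≤ (k/16)*‖w τ‖^2 := mul_le_mul_of_nonneg_right hη3 hUnn
        linarith only [h4, h5]
      have hp2 : c₁ * ‖P (ψ τ)‖^2 ≤ C_P^2 * ‖D (ψ τ)‖^2 :=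
        le_trans (ha_lower (P (ψ τ))) (hP_poincare (ψ τ))
      have hyoungp : ∀ z : V, ‖P (ψ τ)‖ * ‖z‖ ≤ bb/4*‖D (ψ τ)‖^2 + Q₁*‖z‖^2 := by
        intro z
        have h2 := young_mul (x := ‖P (ψ τ)‖) (y := ‖z‖)
          (c := c₁*bb/(2*C_P^2)) (by positivity)
        have e1 : 1/(2*(c₁*bb/(2*C_P^2))) = Q₁ := by rw [hQ₁def]; field_simp
        rw [e1] at h2
        have e2 : (c₁*bb/(2*C_P^2))/2 * ‖P (ψ τ)‖^2 ≤ bb/4*‖D (ψ τ)‖^2 := by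
          have h3 := mul_le_mul_of_nonneg_left hp2
            (show (0:ℝ) ≤ bb/(4*C_P^2) by positivity)
          calc (c₁*bb/(2*C_P^2))/2 * ‖P (ψ τ)‖^2
              = bb/(4*C_P^2)*(c₁*‖P (ψ τ)‖^2) := by ring
            _ ≤ bb/(4*C_P^2)*(C_P^2*‖D (ψ τ)‖^2) := h3
            _ = bb/4*‖D (ψ τ)‖^2 := by field_simp
        linarith
      have hfp : ⟪F₁ τ - F₂ τ, P (ψ τ)⟫ ≤ Q₁*‖F₁ τ - F₂ τ‖^2 + bb/4*‖D (ψ τ)‖^2 := by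
        have h1 := real_inner_le_norm (F₁ τ - F₂ τ) (P (ψ τ))
        have h2 := hyoungp (F₁ τ - F₂ τ)
        linarith only [h1, h2]
      have hgp : -⟪G (deriv φ₁ τ) - G (deriv φ₂ τ), P (ψ τ)⟫
          ≤ Q₁*‖G (deriv φ₁ τ) - G (deriv φ₂ τ)‖^2 + bb/4*‖D (ψ τ)‖^2 := by
        have h1 := abs_real_inner_le_norm (G (deriv φ₁ τ) - G (deriv φ₂ τ)) (P (ψ τ))
        have h1' := neg_abs_le ⟪G (deriv φ₁ τ) - G (deriv φ₂ τ), P (ψ τ)⟫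
        have h2 := hyoungp (G (deriv φ₁ τ) - G (deriv φ₂ τ))
        linarith only [h1, h1', h2]
      have hrt : -(r (w τ) (P (ψ τ)))
          ≤ ρ*(s₀/2*(a (w τ) (w τ)) + 1/(2*s₀)*(a (P (ψ τ)) (P (ψ τ)))) := by
        have h1 := hr_bound (w τ) (P (ψ τ))
        have h2 := young_sqrt hauu happ hs₀pos
        have h3 := neg_abs_le (r (w τ) (P (ψ τ)))
        have h4 := mul_le_mul_of_nonneg_left h2 hρ
        linarith only [h1, h4, h3]
      have hrt2 : -(η*(r (w τ) (P (ψ τ)))) ≤ k/16*‖w τ‖^2 + η*(bb/4)*‖D (ψ τ)‖^2 := by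
        have h1 := mul_le_mul_of_nonneg_left hrt hηpos.le
        have h2 : η*(ρ*(s₀/2*(a (w τ) (w τ)))) ≤ k/16*‖w τ‖^2 := by
          have h3 : a (w τ) (w τ) ≤ c₂*‖w τ‖^2 := ha_upper (w τ)
          have h4 : (0:ℝ) ≤ η*ρ*s₀/2 := by positivity
          have h5 := mul_le_mul_of_nonneg_left h3 h4
          have h6 : (η*ρ*s₀/2)*c₂ ≤ k/16 := by
            linarith only [hη4, mul_nonneg hηpos.le hc₂.le]
          have h7 := mul_le_mul_of_nonneg_right h6 hUnn
          linarith only [h5, h7]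
        have h7 : η*(ρ*(1/(2*s₀)*(a (P (ψ τ)) (P (ψ τ))))) ≤ η*(bb/4)*‖D (ψ τ)‖^2 := by
          have h8 : a (P (ψ τ)) (P (ψ τ)) ≤ C_P^2*‖D (ψ τ)‖^2 := hP_poincare (ψ τ)
          have h9 : ρ*(1/(2*s₀))*C_P^2 ≤ bb/4 := by
            rw [hs₀def]
            have he : ρ*(1/(2*((2*ρ*C_P^2+1)/bb)))*C_P^2
                = ρ*C_P^2*bb/(2*(2*ρ*C_P^2+1)) := by field_simp
            rw [he, div_le_div_iff₀ (by positivity) (by norm_num : (0:ℝ) < 4)]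
            linarith only [hbb.le]
          have h10 : (0:ℝ) ≤ η*ρ*(1/(2*s₀)) := by positivity
          have h11 := mul_le_mul_of_nonneg_left h8 h10
          have h12 := mul_le_mul_of_nonneg_right
            (mul_le_mul_of_nonneg_left h9 hηpos.le) hd2nn
          linarith only [h11, h12]
        linarith only [h1, h2, h7]
      have hfp2 : η*⟪F₁ τ - F₂ τ, P (ψ τ)⟫
          ≤ Q₁*‖F₁ τ - F₂ τ‖^2 + η*(bb/4)*‖D (ψ τ)‖^2 := by
        have h1 := mul_le_mul_of_nonneg_left hfp hηpos.le
        have hQf0 : (0:ℝ) ≤ Q₁*‖F₁ τ - F₂ τ‖^2 := by positivity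
        have h2 : η*(Q₁*‖F₁ τ - F₂ τ‖^2) ≤ Q₁*‖F₁ τ - F₂ τ‖^2 := by
          nlinarith only [hη1, hQf0]
        linarith only [h1, h2]
      have hgp2 : -(η*⟪G (deriv φ₁ τ) - G (deriv φ₂ τ), P (ψ τ)⟫)
          ≤ k/2*‖G (deriv φ₁ τ) - G (deriv φ₂ τ)‖^2 + η*(bb/4)*‖D (ψ τ)‖^2 := by
        have h1 := mul_le_mul_of_nonneg_left hgp hηpos.le
        have h2 := mul_le_mul_of_nonneg_right hη5 hGnn
        linarith only [h1, h2]
      have hβε : η*((β/ε^2)*‖D (ψ τ)‖^2) = 2*(η*bb*‖D (ψ τ)‖^2) := by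
        rw [hbbdef]; field_simp
      have hm0 : (2*K+Q₁)*‖F₁ τ - F₂ τ‖^2 ≤ (2*K+Q₁)*δ₂ :=
        mul_le_mul_of_nonneg_left hffδ (by positivity)
      have hLle : Lf τ ≤ 3/2 * E τ := by
        have h := (abs_le.mp (hcomp τ)).2
        simp only [hLfdef]
        linarith only [h]
      have hμL : μ * Lf τ ≤ k/4*‖w τ‖^2 + η*bb*‖D (ψ τ)‖^2 := by
        have h1 : μ * Lf τ ≤ μ * (3/2 * E τ) := mul_le_mul_of_nonneg_left hLle hμpos.le
        have h2 : μ * (3/2 * E τ) = lam * E τ := by rw [hμdef]; ring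
        have h3 : lam * E τ ≤ k/4*‖w τ‖^2 + η*bb*‖D (ψ τ)‖^2 := by
          rw [hEE τ]
          have h4 : lam * (1/2 * a (w τ) (w τ)) ≤ (k/(2*c₂)) * (1/2 * a (w τ) (w τ)) :=
            mul_le_mul_of_nonneg_right hlam1 (by linarith)
          have h5 : (k/(2*c₂)) * (1/2 * a (w τ) (w τ))
              ≤ (k/(2*c₂)) * (1/2 * (c₂*‖w τ‖^2)) := by
            apply mul_le_mul_of_nonneg_left _ (by positivity)
            have := ha_upper (w τ); linarith
          have h6 : (k/(2*c₂)) * (1/2 * (c₂*‖w τ‖^2)) = k/4*‖w τ‖^2 := by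
            field_simp; ring
          have h7 : lam * (bb*‖D (ψ τ)‖^2) ≤ η * (bb*‖D (ψ τ)‖^2) :=
            mul_le_mul_of_nonneg_right hlam2 (by positivity)
          linarith only [h4, h5, h6, h7]
        calc μ * Lf τ ≤ μ * (3/2 * E τ) := h1
          _ = lam * E τ := h2
          _ ≤ _ := h3
      -- dropped nonnegative quantities
      have hd1 : (0:ℝ) ≤ k*‖w τ‖^2 := mul_nonneg hkpos.le hUnn
      have hd2' : (0:ℝ) ≤ k*‖G (deriv φ₁ τ) - G (deriv φ₂ τ)‖^2 := mul_nonneg hkpos.le hGnn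
      have hd3 : (0:ℝ) ≤ η*bb*‖D (ψ τ)‖^2 :=
        mul_nonneg (mul_nonneg hηpos.le hbb.le) hd2nn
      simp only [hLddef, hLfdef, hQfdef]
      simp only [hLfdef, hQfdef] at hμL
      linarith only [hEdval, hQdval2, ht1, hconv, haup, hrt2, hfp2, hgp2, hβε, hm0, hμL,
        hX0, hd1, hd2', hd3, hA₀def]
    -- Gronwall and conclusion
    have hgron := gronwall_aux hμpos hLD hkey t ht
    have hEt2 : E t ≤ 2 * Lf t := by
      have h := (abs_le.mp (hcomp t)).1
      simp only [hLfdef]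
      linarith only [h]
    have hL0 : Lf 0 ≤ 3/2*δ₁ := by
      have h := (abs_le.mp (hcomp 0)).2
      have h2 := hEnonneg 0
      simp only [hLfdef]
      linarith only [h, h2, hE0]
    have hAμnn : (0:ℝ) ≤ A₀/μ := div_nonneg hA₀0 hμpos.le
    have hmax : max (Lf 0) (A₀/μ) ≤ 3/2*δ₁ + A₀/μ := by
      apply max_le
      · linarith only [hL0, hAμnn]
      · linarith only [hδ₁]
    have hEfin : E t ≤ 3*δ₁ + 2*(A₀/μ) := by linarith only [hgron, hEt2, hmax]
    suffices hfinal : 2*(A₀/μ) ≤ 3*C₅/c₃*δ₂^ee by linarith only [hEfin, hfinal]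
    -- lower bound for the decay rate
    have hminpos : 0 < min k 1 := lt_min hkpos one_pos
    have hc₃1 : c₃ ≤ 1/2 := min_le_left _ _
    have hc₃2 : c₃ ≤ bb/C_P^2 := le_trans (min_le_right _ _) (min_le_left _ _)
    have hc₃3 : c₃ ≤ 1/(16*c₂) :=
      le_trans (min_le_right _ _) (le_trans (min_le_right _ _) (min_le_left _ _))
    have hc₃4 : c₃ ≤ 1/(8*(ρ*s₀+1)*c₂) :=
      le_trans (min_le_right _ _) (le_trans (min_le_right _ _)
        (le_trans (min_le_right _ _) (min_le_left _ _)))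
    have hc₃5 : c₃ ≤ c₁*bb/(2*C_P^2) :=
      le_trans (min_le_right _ _) (le_trans (min_le_right _ _)
        (le_trans (min_le_right _ _) (le_trans (min_le_right _ _) (min_le_left _ _))))
    have hc₃6 : c₃ ≤ 1/(2*c₂) :=
      le_trans (min_le_right _ _) (le_trans (min_le_right _ _)
        (le_trans (min_le_right _ _) (le_trans (min_le_right _ _) (min_le_right _ _))))
    have hmk : min k 1 ≤ k := min_le_left _ _
    have hm1 : min k 1 ≤ 1 := min_le_right _ _
    have hlamlb : c₃ * min k 1 ≤ lam := by
      rw [hlamdef, hηdef]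
      apply le_min
      · calc c₃ * min k 1 ≤ (1/(2*c₂)) * k :=
            mul_le_mul hc₃6 hmk hminpos.le (by positivity)
          _ = k/(2*c₂) := by ring
      · apply le_min
        · apply le_min
          · calc c₃ * min k 1 ≤ (1/2) * 1 := mul_le_mul hc₃1 hm1 hminpos.le (by norm_num)
              _ = 1/2 := by ring
          · calc c₃ * min k 1 ≤ (bb/C_P^2) * 1 :=
                mul_le_mul hc₃2 hm1 hminpos.le (le_of_lt (by positivity))
              _ = bb/C_P^2 := by ring
        · apply le_min
          · calc c₃ * min k 1 ≤ (1/(16*c₂)) * k :=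
                mul_le_mul hc₃3 hmk hminpos.le (by positivity)
              _ = 1/(16*K*c₂) := by rw [hkdef]; field_simp; try ring
          · apply le_min
            · calc c₃ * min k 1 ≤ (1/(8*(ρ*s₀+1)*c₂)) * k :=
                  mul_le_mul hc₃4 hmk hminpos.le (by positivity)
                _ = 1/(8*K*(ρ*s₀+1)*c₂) := by rw [hkdef]; field_simp; try ring
            · calc c₃ * min k 1 ≤ (c₁*bb/(2*C_P^2)) * k :=
                  mul_le_mul hc₃5 hmk hminpos.le (le_of_lt (by positivity))
                _ = c₁*bb/(2*C_P^2*K) := by rw [hkdef]; field_simp; try ring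
    -- power estimates
    have hδ₂eepos : 0 < δ₂^ee := Real.rpow_pos_of_pos hδ₂pos _
    have hδ₂le : δ₂ ≤ δ₂^ee := by
      have h := Real.rpow_le_rpow_of_exponent_ge hδ₂pos hδ₂1 hee1
      rwa [Real.rpow_one] at h
    have hrw1 : δ ^ (-(1/α)) = δ₂ ^ (γ*(-(1/α))) := by
      rw [hδdef, ← Real.rpow_mul hδ₂0]
    have hKδ₂ : K * δ₂ ≤ (2*M + B) * δ₂^ee := by
      have h1 : δ ^ (-(1/α)) * δ₂ = δ₂ ^ (γ*(-(1/α)) + 1) := by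
        rw [hrw1, Real.rpow_add hδ₂pos, Real.rpow_one]
      have he : γ*(-(1/α)) + 1 = 1/(2-α) := by
        rw [hγdef]; field_simp; ring
      have hexp : ee ≤ γ*(-(1/α)) + 1 := by
        rw [he, heedef, div_le_div_iff₀ h2α h2α]
        nlinarith only [mul_pos h1α h2α]
      have h2 : δ₂ ^ (γ*(-(1/α)) + 1) ≤ δ₂ ^ ee :=
        Real.rpow_le_rpow_of_exponent_ge hδ₂pos hδ₂1 hexp
      have h2' : δ ^ (-(1/α)) * δ₂ ≤ δ₂^ee := by rw [h1]; exact h2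
      have h3 := mul_le_mul_of_nonneg_left h2' hBpos.le
      have h4 := mul_le_mul_of_nonneg_left hδ₂le (by positivity : (0:ℝ) ≤ 2*M)
      rw [hKdef]
      nlinarith only [h3, h4]
    have hK2δ₂ : K^2 * δ₂ ≤ (8*M^2 + 2*B^2) * δ₂^ee := by
      have e2 : (δ^(-(1/α)))^2 = δ₂ ^ (γ*(-(1/α))*2) := by
        rw [hrw1, ← Real.rpow_natCast (δ₂ ^ (γ*(-(1/α)))) 2, ← Real.rpow_mul hδ₂0]
        norm_num
      have h1 : (δ^(-(1/α)))^2 * δ₂ = δ₂ ^ (γ*(-(1/α))*2 + 1) := by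
        rw [e2, Real.rpow_add hδ₂pos, Real.rpow_one]
      have hexp2 : γ*(-(1/α))*2 + 1 = ee := by
        rw [hγdef, heedef]; field_simp; ring
      have h2 : (δ^(-(1/α)))^2 * δ₂ = δ₂ ^ ee := by rw [h1, hexp2]
      have h2b : 2*B^2*((δ^(-(1/α)))^2 * δ₂) = 2*B^2*δ₂^ee := by rw [h2]
      have hKsq : K^2 ≤ 8*M^2 + 2*B^2*(δ^(-(1/α)))^2 := by
        rw [hKdef]
        nlinarith only [sq_nonneg (2*M - B*δ^(-(1/α))), sq_nonneg (2*M + B*δ^(-(1/α))),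
          sq_nonneg (B*δ^(-(1/α))), hM.le, mul_pos hBpos hδα]
      have h3 := mul_le_mul_of_nonneg_right hKsq hδ₂0
      have h4 := mul_le_mul_of_nonneg_left hδ₂le (by positivity : (0:ℝ) ≤ 8*M^2)
      nlinarith only [h3, h2b, h4]
    have hRe : R = c₀ * δ₂^ee := by
      have he2 : γ*(1/(1-α)) = ee := by
        rw [hγdef, heedef]; field_simp
      rw [hRdef, hδdef, ← Real.rpow_mul hδ₂0, he2]
    have hkQ : Q₁*(K*δ₂) ≤ Q₁*((2*M+B)*δ₂^ee) := mul_le_mul_of_nonneg_left hKδ₂ hQ₁pos.le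
    have hkk1 : k*(K+1) = 1 + k := by rw [mul_add, hkK, mul_one]
    have hkey2 : A₀*(K+1) ≤ C₅*δ₂^ee := by
      rw [hA₀def, hC₅def]
      have e1 : ((2*K+Q₁)*δ₂ + k*R)*(K+1)
          = 2*(K^2*δ₂) + 2*(K*δ₂) + Q₁*(K*δ₂) + Q₁*δ₂ + (k*(K+1))*R := by ring
      rw [e1, hkk1]
      have hq2 : Q₁*δ₂ ≤ Q₁*δ₂^ee := mul_le_mul_of_nonneg_left hδ₂le hQ₁pos.le
      have hr2 : (1+k)*R ≤ (1+1/(2*M))*R :=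
        mul_le_mul_of_nonneg_right (by linarith only [hk2M]) hR0
      have hr3 : (1+1/(2*M))*R = (1+1/(2*M))*c₀*δ₂^ee := by rw [hRe]; ring
      linarith only [hK2δ₂, hKδ₂, hkQ, hq2, hr2, hr3]
    have h1m : 1 ≤ (min k 1)*(K+1) := by
      rcases le_total k 1 with h | h
      · rw [min_eq_left h, hkk1]
        linarith only [hkpos]
      · rw [min_eq_right h, one_mul]
        linarith only [hKpos]
    have hgo : 2*A₀ ≤ (3*C₅/c₃*δ₂^ee)*μ := by
      have hμlb : (2/3)*(c₃*min k 1) ≤ μ := by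
        rw [hμdef]
        have h := mul_le_mul_of_nonneg_left hlamlb (by norm_num : (0:ℝ) ≤ 2/3)
        linarith only [h]
      have hc1 : (3*C₅/c₃*δ₂^ee)*((2/3)*(c₃*min k 1)) = 2*(C₅*δ₂^ee)*(min k 1) := by
        field_simp
      have hcoefnn : (0:ℝ) ≤ 3*C₅/c₃*δ₂^ee :=
        mul_nonneg (div_nonneg (by linarith only [hC₅pos]) hc₃pos.le) hδ₂eepos.le
      have hge : (3*C₅/c₃*δ₂^ee)*((2/3)*(c₃*min k 1)) ≤ (3*C₅/c₃*δ₂^ee)*μ :=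
        mul_le_mul_of_nonneg_left hμlb hcoefnn
      have hge2 : 2*(C₅*δ₂^ee)*(min k 1) ≤ (3*C₅/c₃*δ₂^ee)*μ := by
        rw [← hc1]; exact hge
      have ha1 : 2*A₀*1 ≤ 2*A₀*((min k 1)*(K+1)) :=
        mul_le_mul_of_nonneg_left h1m (by linarith only [hA₀0])
      have ha2 : (A₀*(K+1))*(min k 1) ≤ (C₅*δ₂^ee)*(min k 1) :=
        mul_le_mul_of_nonneg_right hkey2 hminpos.le
      exact final_combo ha1 ha2 hge2
    calc 2*(A₀/μ) = (2*A₀)/μ := by ring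
      _ ≤ 3*C₅/c₃*δ₂^ee := by
          rw [div_le_iff₀ hμpos]
          exact hgo
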